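/- Let f(z) = Σ_{n≥1} f_n z^n have nonnegative real coefficients and suppose it converges absolutely on the circle |z| = λ^{-1} with f(λ^{-1}) = 1. If z is a complex number with |z| = λ^{-1} and f(z) = 1, then z = ω λ^{-1} where ω is a root of unity whose order q divides every n with f_n ≠ 0. In particular, if gcd{n : f_n ≠ 0} = 1, then z = λ^{-1} is the only solution on this circle. -/

import Mathlib

/-- Let `f(z) = Σ_{n≥1} f_n z^n` have nonnegative real coefficients,
absolutely convergent on the circle `|z| = λ⁻¹`, with `f(λ⁻¹) = 1`.  If `z ∈ ℂ`
satisfies `|z| = λ⁻¹` and `f(z) = 1`, then `z = ω·λ⁻¹` where `ω` is a root of unity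
whose order divides every `n` with `f_n ≠ 0`.  In particular, if
`gcd{n : f_n ≠ 0} = 1`, then `z = λ⁻¹`. -/
theorem stmt1 (f : ℕ → ℝ) (lam : ℝ) (z : ℂ)
    (hf0 : f 0 = 0) (hfnonneg : ∀ n, 0 ≤ f n) (hlam : 0 < lam)
    (habs : Summable fun n : ℕ => f n * lam⁻¹ ^ n)
    (hval : ∑' n : ℕ, f n * lam⁻¹ ^ n = 1)
    (hz : ‖z‖ = lam⁻¹)
    (hfz : ∑' n : ℕ, (f n : ℂ) * z ^ n = 1) :
    (∃ ω : ℂ, ∃ q : ℕ, 0 < q ∧ orderOf ω = q ∧ ω ^ q = 1 ∧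
      z = ω * (lam⁻¹ : ℂ) ∧ ∀ n, f n ≠ 0 → q ∣ n) ∧
    ((∀ d : ℕ, (∀ n, f n ≠ 0 → d ∣ n) → d = 1) → z = (lam⁻¹ : ℂ)) := by
  have hlamC : (lam : ℂ) ≠ 0 := by exact_mod_cast hlam.ne'
  have hnorm : ∀ n : ℕ, ‖(f n : ℂ) * z ^ n‖ = f n * lam⁻¹ ^ n := by
    intro n
    rw [norm_mul, norm_pow, hz, Complex.norm_real, Real.norm_eq_abs,
      abs_of_nonneg (hfnonneg n)]
  have hsumC : Summable fun n : ℕ => (f n : ℂ) * z ^ n := by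
    apply Summable.of_norm
    simpa only [hnorm] using habs
  have hre : Summable fun n : ℕ => ((f n : ℂ) * z ^ n).re :=
    hsumC.map Complex.reCLM Complex.continuous_re
  have hretsum : ∑' n : ℕ, ((f n : ℂ) * z ^ n).re = 1 := by
    have := Complex.re_tsum hsumC
    rw [hfz] at this
    simpa using this.symm
  set g : ℕ → ℝ := fun n => f n * lam⁻¹ ^ n - ((f n : ℂ) * z ^ n).re with hg
  have hgnonneg : ∀ n, 0 ≤ g n := by
    intro n
    have h1 : ((f n : ℂ) * z ^ n).re ≤ ‖(f n : ℂ) * z ^ n‖ := Complex.re_le_norm _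
    rw [hnorm] at h1
    simp only [hg]
    linarith
  have hgsum : Summable g := habs.sub hre
  have hgtsum : ∑' n, g n = 0 := by
    simp only [hg]
    rw [Summable.tsum_sub habs hre, hval, hretsum, sub_self]
  have hgzero : ∀ n, g n = 0 := by
    intro n
    have h1 : g n ≤ ∑' m, g m := Summable.le_tsum hgsum n (fun m _ => hgnonneg m)
    rw [hgtsum] at h1
    linarith [hgnonneg n]
  have hterm : ∀ n, f n ≠ 0 → z ^ n = (lam⁻¹ : ℂ) ^ n := by
    intro n hfn
    have h0 : f n * lam⁻¹ ^ n - ((f n : ℂ) * z ^ n).re = 0 := hgzero n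
    have hre' : ((f n : ℂ) * z ^ n).re = f n * lam⁻¹ ^ n := by linarith
    have habsre : ‖(f n : ℂ) * z ^ n‖ = ((f n : ℂ) * z ^ n).re := by
      rw [hnorm, hre']
    have him : ((f n : ℂ) * z ^ n).im = 0 := by
      have h2 := Complex.sq_norm ((f n : ℂ) * z ^ n)
      rw [Complex.normSq_apply, habsre] at h2
      nlinarith [h2]
    have heq : (f n : ℂ) * z ^ n = ((f n * lam⁻¹ ^ n : ℝ) : ℂ) := by
      apply Complex.ext
      · rw [Complex.ofReal_re]; exact hre'
      · rw [Complex.ofReal_im]; exact him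
    have h3 : (f n : ℂ) * z ^ n = (f n : ℂ) * (lam⁻¹ : ℂ) ^ n := by
      rw [heq]; push_cast; ring
    have hfn' : (f n : ℂ) ≠ 0 := by exact_mod_cast hfn
    exact mul_left_cancel₀ hfn' h3
  set ω : ℂ := lam * z with hω
  have hωpow : ∀ n, f n ≠ 0 → ω ^ n = 1 := by
    intro n hfn
    rw [hω, mul_pow, hterm n hfn, ← mul_pow]
    rw [mul_inv_cancel₀ hlamC, one_pow]
  have hex : ∃ n, f n ≠ 0 := by
    by_contra h
    push_neg at h
    simp [h] at hval
  obtain ⟨n₀, hn₀⟩ := hex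
  have hn₀pos : 0 < n₀ := Nat.pos_of_ne_zero (fun h => hn₀ (h ▸ hf0))
  have hfin : IsOfFinOrder ω :=
    isOfFinOrder_iff_pow_eq_one.mpr ⟨n₀, hn₀pos, hωpow n₀ hn₀⟩
  have hq : 0 < orderOf ω := hfin.orderOf_pos
  have hzω : z = ω * (lam⁻¹ : ℂ) := by
    rw [hω]
    rw [mul_comm (lam : ℂ) z, mul_assoc, mul_inv_cancel₀ hlamC, mul_one]
  constructor
  · exact ⟨ω, orderOf ω, hq, rfl, pow_orderOf_eq_one ω, hzω,
      fun n hfn => orderOf_dvd_of_pow_eq_one (hωpow n hfn)⟩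
  · intro hd
    have h1 : orderOf ω = 1 := hd _ (fun n hfn => orderOf_dvd_of_pow_eq_one (hωpow n hfn))
    have hω1 : ω = 1 := orderOf_eq_one_iff.mp h1
    rw [hzω, hω1, one_mul]
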